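/- Let M be a symmetric negative definite real n×n matrix whose off-diagonal entries are nonnegative (M_{ij} ≥ 0 for all i ≠ j). Then there exists a vector x ∈ ℝ^n with x_i ≥ 0 for every i such that (Mx)_i < 0 for every i. -/
import Mathlib

open Matrix

/-- **Existence of an "effective contracting" vector.**
If `M` is a symmetric negative definite real `n × n` matrix with nonnegative
off-diagonal entries, then there is a vector `x` with nonnegative entries such
that `(M x)ᵢ < 0` for every `i`. -/
theorem negdef_nonneg_offdiag_exists_nonneg_vector
    (n : ℕ) (M : Matrix (Fin n) (Fin n) ℝ) (hsym : M.IsSymm)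
    (hneg : ∀ x : Fin n → ℝ, x ≠ 0 → x ⬝ᵥ M.mulVec x < 0)
    (hoff : ∀ i j : Fin n, i ≠ j → 0 ≤ M i j) :
    ∃ x : Fin n → ℝ, (∀ i, 0 ≤ x i) ∧ ∀ i, M.mulVec x i < 0 := by
  -- M is invertible since it's negative definite
  have hinj : Function.Injective M.mulVec := by
    intro y z h
    by_contra hyz
    have hd : (y - z) ≠ 0 := sub_ne_zero.mpr hyz
    have := hneg (y - z) hd
    rw [Matrix.mulVec_sub, h, sub_self] at this
    simp at this
  have hunit : IsUnit M := Matrix.mulVec_injective_iff_isUnit.mp hinj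
  obtain ⟨x, hx⟩ := Matrix.mulVec_surjective_iff_isUnit.mpr hunit (fun _ => (-1 : ℝ))
  -- positive and negative parts
  set xp : Fin n → ℝ := fun i => max (x i) 0 with hxp
  set xm : Fin n → ℝ := fun i => max (-x i) 0 with hxm
  have hxpm : x = xp - xm := by
    funext i; simp [hxp, hxm, max_def]; split_ifs with h1 h2 <;> linarith
  have hxp0 : ∀ i, 0 ≤ xp i := fun i => le_max_right _ _
  have hxm0 : ∀ i, 0 ≤ xm i := fun i => le_max_right _ _
  have hprod : ∀ i, xm i * xp i = 0 := by
    intro i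
    rcases le_or_gt (x i) 0 with h | h
    · have : xp i = 0 := max_eq_right h; simp [this]
    · have : xm i = 0 := max_eq_right (by linarith); simp [this]
  -- claim xm = 0
  by_cases hm0 : xm = 0
  · refine ⟨x, ?_, ?_⟩
    · intro i
      have := congrFun hm0 i
      simp [hxm, max_eq_right_iff] at this
      linarith [this]
    · intro i; rw [hx]; norm_num
  · exfalso
    have hA : xm ⬝ᵥ M.mulVec xm < 0 := hneg xm hm0
    have hB : xm ⬝ᵥ M.mulVec x ≤ 0 := by
      rw [hx]
      simp only [dotProduct]
      apply Finset.sum_nonpos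
      intro i _
      nlinarith [hxm0 i]
    have hC : xm ⬝ᵥ M.mulVec xp < 0 := by
      have : M.mulVec xp = M.mulVec x + M.mulVec xm := by
        rw [hxpm, Matrix.mulVec_sub]; abel
      rw [this, dotProduct_add]
      linarith
    have hC' : 0 ≤ xm ⬝ᵥ M.mulVec xp := by
      unfold dotProduct Matrix.mulVec dotProduct
      apply Finset.sum_nonneg
      intro i _
      rw [Finset.mul_sum]
      apply Finset.sum_nonneg
      intro j _
      rcases eq_or_ne i j with rfl | hij
      · have h1 : xm i * (M i i * xp i) = M i i * (xm i * xp i) := by ring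
        rw [h1, hprod i, mul_zero]
      · exact mul_nonneg (hxm0 i) (mul_nonneg (hoff i j hij) (hxp0 j))
    linarith
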